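/- Let X = (X_i)_{i∈ℕ} be a sequence of independent integrable real random variables with E[X_i] = 0 for every i, let X̂ = (X̂_i)_{i∈ℕ} be an independent copy of X, and let Θ = (θ_i)_{i∈ℕ} be i.i.d. standard exponential random variables, with X, X̂, Θ mutually independent. For t > 0 define X^t_i = X_i·1{θ_i ≥ t} + X̂_i·1{θ_i < t}. Then for every integer p ≥ 1 and every finitely supported kernel f of order p, almost surely E[ Q_p(f; X^t) | σ(X) ] = e^{−pt} · Q_p(f; X). -/

import Mathlib

open MeasureTheory ProbabilityTheory Filter
open scoped ENNReal NNReal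

/-- A kernel of order `p`: a function on `p`-tuples of indices that is symmetric in its
arguments and vanishes on diagonals. -/
def IsKernel {p : ℕ} (f : (Fin p → ℕ) → ℝ) : Prop :=
  (∀ (σ : Equiv.Perm (Fin p)) (i : Fin p → ℕ), f (i ∘ σ) = f i) ∧
  (∀ i : Fin p → ℕ, ¬ Function.Injective i → f i = 0)

/-- The homogeneous sum `Q_p(f; X)` for a kernel `f` supported on indices `< d`:
the finite sum `∑_{i₁,…,i_p < d} f(i₁,…,i_p) X_{i₁} ⋯ X_{i_p}`. -/
noncomputable def homSum {Ω : Type*} (p d : ℕ) (f : (Fin p → ℕ) → ℝ)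
    (X : ℕ → Ω → ℝ) (ω : Ω) : ℝ :=
  ∑ i : Fin p → Fin d, f (fun k => (i k : ℕ)) * ∏ k, X (i k : ℕ) ω

private lemma prod_indep_aux {Ω : Type*} [m0 : MeasurableSpace Ω] {μ : Measure Ω}
    [IsProbabilityMeasure μ] {κ : Type*} [DecidableEq κ]
    {blk : κ → MeasurableSpace Ω}
    {V : κ → Ω → ℝ} (hVm : ∀ k, Measurable[blk k] (V k))
    (hVi : ∀ k, Integrable (V k) μ)
    (hind : ∀ (s : Finset κ) (k), k ∉ s → Indep (blk k) (⨆ l ∈ s, blk l) μ)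
    (s : Finset κ) :
    Integrable (fun ω => ∏ k ∈ s, V k ω) μ ∧
      ∫ ω, ∏ k ∈ s, V k ω ∂μ = ∏ k ∈ s, ∫ ω, V k ω ∂μ := by
  classical
  induction s using Finset.induction_on with
  | empty => simp
  | @insert k s hk ih =>
    have hWm : Measurable[⨆ l ∈ s, blk l] (fun ω => ∏ l ∈ s, V l ω) :=
      Finset.measurable_prod s fun l hl => (hVm l).mono (le_biSup blk hl) le_rfl
    have hWi : Integrable (fun ω => ∏ l ∈ s, V l ω) μ := ih.1
    have hIF : IndepFun (V k) (fun ω => ∏ l ∈ s, V l ω) μ := by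
      have h1 := hind s k hk
      have h2 := indep_of_indep_of_le_left h1 ((hVm k).comap_le)
      exact indep_of_indep_of_le_right h2 hWm.comap_le
    have hmul : Integrable (fun ω => V k ω * ∏ l ∈ s, V l ω) μ :=
      hIF.integrable_mul (hVi k) hWi
    constructor
    · exact hmul.congr (Filter.Eventually.of_forall fun ω =>
        (Finset.prod_insert (f := fun l => V l ω) hk).symm)
    · have he : (fun ω => ∏ l ∈ insert k s, V l ω) = fun ω => V k ω * ∏ l ∈ s, V l ω :=
        funext fun ω => Finset.prod_insert hk
      rw [he, hIF.integral_fun_mul_eq_mul_integral (hVi k).1 hWi.1, ih.2, Finset.prod_insert hk]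

private lemma key_lemma {Ω : Type*} [mΩ : MeasurableSpace Ω] (μ : Measure Ω) [IsProbabilityMeasure μ]
    (X Xhat Θ : ℕ → Ω → ℝ)
    (hXmeas : ∀ i, Measurable (X i)) (hXhatmeas : ∀ i, Measurable (Xhat i))
    (hΘmeas : ∀ i, Measurable (Θ i))
    (hXint : ∀ i, Integrable (X i) μ) (hXmean : ∀ i, ∫ ω, X i ω ∂μ = 0)
    (hIndep : iIndepFun (Sum.elim X (Sum.elim Xhat Θ)) μ)
    (hcopy : ∀ i, μ.map (Xhat i) = μ.map (X i))
    (hexp : ∀ i, ∀ s : ℝ, 0 ≤ s → μ {ω | s ≤ Θ i ω} = ENNReal.ofReal (Real.exp (-s)))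
    (t : ℝ) (ht : 0 < t) (p : ℕ)
    (j : Fin p → ℕ) (hj : Function.Injective j) :
    Integrable (fun ω => ∏ k, (if t ≤ Θ (j k) ω then X (j k) ω else Xhat (j k) ω)) μ ∧
    μ[(fun ω => ∏ k, (if t ≤ Θ (j k) ω then X (j k) ω else Xhat (j k) ω)) |
        ⨆ i, MeasurableSpace.comap (X i) inferInstance]
      =ᵐ[μ] fun ω => Real.exp (-(p * t)) * ∏ k, X (j k) ω := by
  classical
  -- the exponential indicator
  set indf : ℕ → Ω → ℝ := fun n ω => if t ≤ Θ n ω then 1 else 0 with hindfdef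
  have hgm : Measurable (fun x : ℝ => if t ≤ x then (1:ℝ) else 0) :=
    Measurable.ite measurableSet_Ici measurable_const measurable_const
  have hind_meas : ∀ n, Measurable[MeasurableSpace.comap (Θ n) inferInstance] (indf n) :=
    fun n => hgm.comp (Measurable.of_comap_le le_rfl)
  have hindf_int : ∀ n, Integrable (indf n) μ := by
    intro n
    refine (integrable_const (1:ℝ)).mono'
      ((hind_meas n).mono (hΘmeas n).comap_le le_rfl).aestronglyMeasurable
      (Filter.Eventually.of_forall fun ω => ?_)
    simp only [hindfdef]
    split <;> simp
  have hindf_val : ∀ n, ∫ ω, indf n ω ∂μ = Real.exp (-t) := by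
    intro n
    have hA : MeasurableSet {ω | t ≤ Θ n ω} := hΘmeas n measurableSet_Ici
    have h1 : (fun ω => indf n ω)
        = Set.indicator {ω | t ≤ Θ n ω} (fun _ => (1:ℝ)) := by
      funext ω
      rw [Set.indicator_apply]
      rfl
    rw [h1, integral_indicator_const (1:ℝ) hA, measureReal_def, hexp n t ht.le,
      ENNReal.toReal_ofReal (Real.exp_pos _).le, smul_eq_mul, mul_one]
  -- the independent copy
  have hXhat_int : ∀ n, Integrable (Xhat n) μ := by
    intro n
    have h1 : Integrable id (μ.map (Xhat n)) := by
      rw [hcopy]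
      exact (integrable_map_measure aestronglyMeasurable_id (hXmeas n).aemeasurable).2 (hXint n)
    exact (integrable_map_measure aestronglyMeasurable_id (hXhatmeas n).aemeasurable).1 h1
  have hXhat_mean : ∀ n, ∫ ω, Xhat n ω ∂μ = 0 := by
    intro n
    have h1 : ∫ ω, Xhat n ω ∂μ = ∫ x, x ∂(μ.map (Xhat n)) :=
      (integral_map (hXhatmeas n).aemeasurable aestronglyMeasurable_id).symm
    have h2 : ∫ x, x ∂(μ.map (X n)) = ∫ ω, X n ω ∂μ :=
      integral_map (hXmeas n).aemeasurable aestronglyMeasurable_id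
    rw [h1, hcopy, h2]
    exact hXmean n
  have hfact : ∀ n, ∫ ω, Xhat n ω * (1 - indf n ω) ∂μ = 0 := by
    intro n
    have hIF : IndepFun (Xhat n) (indf n) μ := by
      have h0 := hIndep.indepFun
        (show (Sum.inr (Sum.inl n) : ℕ ⊕ (ℕ ⊕ ℕ)) ≠ Sum.inr (Sum.inr n) by simp)
      exact h0.comp measurable_id hgm
    have hb : Integrable (fun ω => Xhat n ω * indf n ω) μ :=
      hIF.integrable_mul (hXhat_int n) (hindf_int n)
    have h2 : (fun ω => Xhat n ω * (1 - indf n ω))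
        = fun ω => Xhat n ω - Xhat n ω * indf n ω := by funext ω; ring
    rw [h2, integral_sub (hXhat_int n) hb,
      hIF.integral_fun_mul_eq_mul_integral (hXhat_int n).1 (hindf_int n).1, hXhat_mean n]
    ring
  set F : ℕ ⊕ (ℕ ⊕ ℕ) → Ω → ℝ := Sum.elim X (Sum.elim Xhat Θ) with hFdef
  set mm : (ℕ ⊕ (ℕ ⊕ ℕ)) → MeasurableSpace Ω :=
    fun a => MeasurableSpace.comap (F a) inferInstance with hmmdef
  have hIndep' : iIndep mm μ := hIndep
  have h_le : ∀ a, mm a ≤ mΩ := by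
    rintro (n | n | n)
    · exact (hXmeas n).comap_le
    · exact (hXhatmeas n).comap_le
    · exact (hΘmeas n).comap_le
  set mX : MeasurableSpace Ω := ⨆ i, MeasurableSpace.comap (X i) inferInstance with hmXdef
  have hmX_le : mX ≤ mΩ := iSup_le fun i => (hXmeas i).comap_le
  haveI : SigmaFinite (μ.trim hmX_le) := inferInstance
  have hmX_eq : mX = ⨆ a ∈ Set.range (Sum.inl : ℕ → ℕ ⊕ (ℕ ⊕ ℕ)), mm a := by
    rw [iSup_range]
    rfl
  set mhat : MeasurableSpace Ω :=
    ⨆ a ∈ (Set.range (Sum.inl : ℕ → ℕ ⊕ (ℕ ⊕ ℕ)))ᶜ, mm a with hmhatdef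
  have hmhat_le : mhat ≤ mΩ := iSup_le fun a => iSup_le fun _ => h_le a
  have hIndep_hat : Indep mhat mX μ := by
    rw [hmX_eq]
    exact indep_iSup_of_disjoint h_le hIndep' disjoint_compl_left
  have hXhat_hat : ∀ n, MeasurableSpace.comap (Xhat n) inferInstance ≤ mhat := by
    intro n
    exact le_biSup mm (by simp : (Sum.inr (Sum.inl n) : ℕ ⊕ (ℕ ⊕ ℕ)) ∈ (Set.range Sum.inl)ᶜ)
  have hΘ_hat : ∀ n, MeasurableSpace.comap (Θ n) inferInstance ≤ mhat := by
    intro n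
    exact le_biSup mm (by simp : (Sum.inr (Sum.inr n) : ℕ ⊕ (ℕ ⊕ ℕ)) ∈ (Set.range Sum.inl)ᶜ)
  set Sk : Fin p → Set (ℕ ⊕ (ℕ ⊕ ℕ)) := fun k =>
    {Sum.inl (j k), Sum.inr (Sum.inl (j k)), Sum.inr (Sum.inr (j k))} with hSkdef
  set blk : Fin p → MeasurableSpace Ω := fun k => ⨆ a ∈ Sk k, mm a with hblkdef
  have hX_blk : ∀ k, MeasurableSpace.comap (X (j k)) inferInstance ≤ blk k := by
    intro k
    exact le_biSup mm (by simp [Sk] : (Sum.inl (j k) : ℕ ⊕ (ℕ ⊕ ℕ)) ∈ Sk k)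
  have hXhat_blk : ∀ k, MeasurableSpace.comap (Xhat (j k)) inferInstance ≤ blk k := by
    intro k
    exact le_biSup mm (by simp [Sk] : (Sum.inr (Sum.inl (j k)) : ℕ ⊕ (ℕ ⊕ ℕ)) ∈ Sk k)
  have hΘ_blk : ∀ k, MeasurableSpace.comap (Θ (j k)) inferInstance ≤ blk k := by
    intro k
    exact le_biSup mm (by simp [Sk] : (Sum.inr (Sum.inr (j k)) : ℕ ⊕ (ℕ ⊕ ℕ)) ∈ Sk k)
  have hblk_indep : ∀ (s : Finset (Fin p)) (k), k ∉ s → Indep (blk k) (⨆ l ∈ s, blk l) μ := by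
    intro s k hk
    have hdis : Disjoint (Sk k) (⋃ l ∈ s, Sk l) := by
      rw [Set.disjoint_left]
      rintro a ha hb
      simp only [Set.mem_iUnion, exists_prop] at hb
      obtain ⟨l, hls, hal⟩ := hb
      have hkl : j k = j l := by
        simp only [hSkdef, Set.mem_insert_iff, Set.mem_singleton_iff] at ha hal
        rcases ha with rfl | rfl | rfl <;> rcases hal with h | h | h <;>
          first
          | exact Sum.inl.inj h
          | exact Sum.inl.inj (Sum.inr.inj h)
          | exact Sum.inr.inj (Sum.inr.inj h)
          | exact absurd h Sum.inl_ne_inr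
          | exact absurd h Sum.inr_ne_inl
          | exact absurd (Sum.inr.inj h) Sum.inl_ne_inr
          | exact absurd (Sum.inr.inj h) Sum.inr_ne_inl
      exact hk (hj hkl ▸ hls)
    have h2 := indep_iSup_of_disjoint h_le hIndep' hdis
    have h3 : (⨆ a ∈ ⋃ l ∈ s, Sk l, mm a) = ⨆ l ∈ s, blk l := by
      simp only [iSup_iUnion, hblkdef]
    exact h3 ▸ h2
  -- per subset S
  have main : ∀ S : Finset (Fin p),
      Integrable (fun ω => ∏ k, (if k ∈ S then X (j k) ω * indf (j k) ω
        else Xhat (j k) ω * (1 - indf (j k) ω))) μ ∧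
      μ[(fun ω => ∏ k, (if k ∈ S then X (j k) ω * indf (j k) ω
          else Xhat (j k) ω * (1 - indf (j k) ω))) | mX]
        =ᵐ[μ] fun ω => (∏ k ∈ S, X (j k) ω) *
          (if S = Finset.univ then Real.exp (-t) ^ p else 0) := by
    intro S
    set V : Fin p → Ω → ℝ := fun k ω => if k ∈ S then X (j k) ω * indf (j k) ω
      else Xhat (j k) ω * (1 - indf (j k) ω) with hVdef
    set H : Fin p → Ω → ℝ := fun k ω => if k ∈ S then indf (j k) ω
      else Xhat (j k) ω * (1 - indf (j k) ω) with hHdef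
    have hbnd1 : ∀ n (ω : Ω), ‖indf n ω‖ ≤ 1 := by
      intro n ω; simp only [hindfdef]; split <;> simp
    have hbnd2 : ∀ n (ω : Ω), ‖1 - indf n ω‖ ≤ 1 := by
      intro n ω; simp only [hindfdef]; split <;> simp
    have hXhmul_int : ∀ n, Integrable (fun ω => Xhat n ω * (1 - indf n ω)) μ := by
      intro n
      have h1 : Integrable (fun ω => (1 - indf n ω) * Xhat n ω) μ :=
        (hXhat_int n).bdd_mul
          (measurable_const.sub
            ((hind_meas n).mono (hΘmeas n).comap_le le_rfl)).aestronglyMeasurable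
          (Filter.Eventually.of_forall fun ω => hbnd2 n ω)
      exact h1.congr (Filter.Eventually.of_forall fun ω => mul_comm _ _)
    have hVm : ∀ k, Measurable[blk k] (V k) := by
      intro k
      by_cases hkS : k ∈ S
      · simp only [hVdef, if_pos hkS]
        exact Measurable.mul ((Measurable.of_comap_le le_rfl).mono (hX_blk k) le_rfl)
          ((hind_meas (j k)).mono (hΘ_blk k) le_rfl)
      · simp only [hVdef, if_neg hkS]
        exact Measurable.mul ((Measurable.of_comap_le le_rfl).mono (hXhat_blk k) le_rfl)
          (measurable_const.sub ((hind_meas (j k)).mono (hΘ_blk k) le_rfl))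
    have hVi : ∀ k, Integrable (V k) μ := by
      intro k
      by_cases hkS : k ∈ S
      · simp only [hVdef, if_pos hkS]
        have h1 : Integrable (fun ω => indf (j k) ω * X (j k) ω) μ :=
          (hXint (j k)).bdd_mul
            ((hind_meas (j k)).mono (hΘmeas (j k)).comap_le le_rfl).aestronglyMeasurable
            (Filter.Eventually.of_forall fun ω => hbnd1 (j k) ω)
        exact h1.congr (Filter.Eventually.of_forall fun ω => mul_comm _ _)
      · simp only [hVdef, if_neg hkS]
        exact hXhmul_int (j k)
    have hHm : ∀ k, Measurable[blk k] (H k) := by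
      intro k
      by_cases hkS : k ∈ S
      · simp only [hHdef, if_pos hkS]
        exact (hind_meas (j k)).mono (hΘ_blk k) le_rfl
      · simp only [hHdef, if_neg hkS]
        exact Measurable.mul ((Measurable.of_comap_le le_rfl).mono (hXhat_blk k) le_rfl)
          (measurable_const.sub ((hind_meas (j k)).mono (hΘ_blk k) le_rfl))
    have hHi : ∀ k, Integrable (H k) μ := by
      intro k
      by_cases hkS : k ∈ S
      · simp only [hHdef, if_pos hkS]; exact hindf_int (j k)
      · simp only [hHdef, if_neg hkS]; exact hXhmul_int (j k)
    have hVP := prod_indep_aux (m0 := mΩ) (blk := blk) hVm hVi hblk_indep Finset.univ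
    have hHP := prod_indep_aux (m0 := mΩ) (blk := blk) hHm hHi hblk_indep Finset.univ
    have hsplit : (fun ω => ∏ k, V k ω)
        = fun ω => (∏ k ∈ S, X (j k) ω) * ∏ k, H k ω := by
      funext ω
      have h1 : ∀ k : Fin p, V k ω = (if k ∈ S then X (j k) ω else 1) * H k ω := by
        intro k
        by_cases hkS : k ∈ S <;> simp [hVdef, hHdef, hkS]
      rw [Finset.prod_congr rfl fun k _ => h1 k, Finset.prod_mul_distrib,
        Finset.prod_ite_mem Finset.univ S (fun k => X (j k) ω), Finset.univ_inter]
    have hZm : Measurable[mX] fun ω => ∏ k ∈ S, X (j k) ω :=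
      Finset.measurable_prod S fun k _ => Measurable.of_comap_le
        (le_iSup (fun i => MeasurableSpace.comap (X i) inferInstance) (j k))
    have hHm' : ∀ k, Measurable[mhat] (H k) := by
      intro k
      by_cases hkS : k ∈ S
      · simp only [hHdef, if_pos hkS]
        exact (hind_meas (j k)).mono (hΘ_hat (j k)) le_rfl
      · simp only [hHdef, if_neg hkS]
        exact Measurable.mul ((Measurable.of_comap_le le_rfl).mono (hXhat_hat (j k)) le_rfl)
          (measurable_const.sub ((hind_meas (j k)).mono (hΘ_hat (j k)) le_rfl))
    have hGm : Measurable[mhat] fun ω => ∏ k, H k ω :=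
      Finset.measurable_prod Finset.univ fun k _ => hHm' k
    have hGint : Integrable (fun ω => ∏ k, H k ω) μ := hHP.1
    have hmul_int : Integrable ((fun ω => ∏ k ∈ S, X (j k) ω) * (fun ω => ∏ k, H k ω)) μ := by
      have := hVP.1
      rw [hsplit] at this
      exact this
    have hce1 : μ[(fun ω => ∏ k, V k ω)|mX]
        =ᵐ[μ] (fun ω => ∏ k ∈ S, X (j k) ω) * μ[(fun ω => ∏ k, H k ω)|mX] := by
      rw [hsplit]
      exact condExp_mul_of_stronglyMeasurable_left hZm.stronglyMeasurable hmul_int hGint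
    have hce2 : μ[(fun ω => ∏ k, H k ω)|mX] =ᵐ[μ] fun _ => ∫ ω, ∏ k, H k ω ∂μ :=
      condExp_indep_eq hmhat_le hmX_le hGm.stronglyMeasurable hIndep_hat
    have hHval : ∫ ω, ∏ k, H k ω ∂μ
        = if S = Finset.univ then Real.exp (-t) ^ p else 0 := by
      rw [hHP.2]
      by_cases hS : S = Finset.univ
      · subst hS
        rw [if_pos rfl]
        have h1 : ∀ k : Fin p, (∫ ω, H k ω ∂μ) = Real.exp (-t) := by
          intro k
          have : H k = indf (j k) := by
            funext ω; simp [hHdef]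
          rw [this]
          exact hindf_val (j k)
        rw [Finset.prod_congr rfl fun k _ => h1 k, Finset.prod_const]
        simp
      · rw [if_neg hS]
        obtain ⟨k, hkS⟩ : ∃ k, k ∉ S := by
          by_contra h
          push_neg at h
          exact hS (Finset.eq_univ_iff_forall.2 h)
        refine Finset.prod_eq_zero (Finset.mem_univ k) ?_
        have : H k = fun ω => Xhat (j k) ω * (1 - indf (j k) ω) := by
          funext ω; simp [hHdef, hkS]
        rw [this]
        exact hfact (j k)
    rw [hHval] at hce2
    refine ⟨hVP.1, ?_⟩
    refine hce1.trans ?_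
    filter_upwards [hce2] with ω h2
    rw [Pi.mul_apply, h2]
  -- decomposition of the product
  have hdecomp : (fun ω => ∏ k, (if t ≤ Θ (j k) ω then X (j k) ω else Xhat (j k) ω))
      = ∑ S : Finset (Fin p), (fun ω => ∏ k, (if k ∈ S then X (j k) ω * indf (j k) ω
          else Xhat (j k) ω * (1 - indf (j k) ω))) := by
    funext ω
    rw [Finset.sum_apply]
    have h1 : ∀ k : Fin p, (if t ≤ Θ (j k) ω then X (j k) ω else Xhat (j k) ω)
        = X (j k) ω * indf (j k) ω + Xhat (j k) ω * (1 - indf (j k) ω) := by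
      intro k
      simp only [hindfdef]
      split <;> ring
    rw [Finset.prod_congr rfl fun k _ => h1 k, Fintype.prod_add]
    refine Finset.sum_congr rfl fun S _ => ?_
    rw [← Finset.prod_mul_prod_compl S (fun k => if k ∈ S then X (j k) ω * indf (j k) ω
      else Xhat (j k) ω * (1 - indf (j k) ω))]
    congr 1
    · exact Finset.prod_congr rfl fun k hk => (if_pos hk).symm
    · exact Finset.prod_congr rfl fun k hk => (if_neg (Finset.mem_compl.1 hk)).symm
  constructor
  · rw [hdecomp]
    exact integrable_finset_sum' _ fun S _ => (main S).1
  · rw [hdecomp]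
    refine (condExp_finsetSum (fun S _ => (main S).1) mX).trans ?_
    have h_all : ∀ᵐ ω ∂μ, ∀ S : Finset (Fin p),
        (μ[(fun ω => ∏ k, (if k ∈ S then X (j k) ω * indf (j k) ω
          else Xhat (j k) ω * (1 - indf (j k) ω))) | mX]) ω
          = (∏ k ∈ S, X (j k) ω) * (if S = Finset.univ then Real.exp (-t) ^ p else 0) :=
      (ae_all_iff).2 fun S => (main S).2
    filter_upwards [h_all] with ω hω
    rw [Finset.sum_apply]
    rw [Finset.sum_congr rfl fun S _ => hω S]
    rw [Finset.sum_eq_single Finset.univ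
      (fun S _ hS => by rw [if_neg hS, mul_zero])
      (fun h => absurd (Finset.mem_univ _) h)]
    rw [if_pos rfl, mul_comm]
    congr 1
    rw [← Real.exp_nat_mul]
    congr 1
    ring

/-- **Mehler-type formula for the exponential-clock exchangeable pair.** With
`X^t_i = X_i 1{θ_i ≥ t} + X̂_i 1{θ_i < t}`, where `X̂` is an independent copy of the
independent centered sequence `X` and `θ_i` are i.i.d. standard exponentials independent
of everything, one has `E[Q_p(f; X^t) | σ(X)] = e^{-pt} Q_p(f; X)` almost surely, for every
finitely supported kernel `f` of order `p ≥ 1`. -/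
theorem stmt8 {Ω : Type*} [MeasurableSpace Ω] (μ : Measure Ω) [IsProbabilityMeasure μ]
    (X Xhat Θ : ℕ → Ω → ℝ)
    (hXmeas : ∀ i, Measurable (X i)) (hXhatmeas : ∀ i, Measurable (Xhat i))
    (hΘmeas : ∀ i, Measurable (Θ i))
    (hXint : ∀ i, Integrable (X i) μ) (hXmean : ∀ i, ∫ ω, X i ω ∂μ = 0)
    (hIndep : iIndepFun (Sum.elim X (Sum.elim Xhat Θ)) μ)
    (hcopy : ∀ i, μ.map (Xhat i) = μ.map (X i))
    (hexp : ∀ i, ∀ s : ℝ, 0 ≤ s → μ {ω | s ≤ Θ i ω} = ENNReal.ofReal (Real.exp (-s)))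
    (t : ℝ) (ht : 0 < t)
    (p : ℕ) (hp : 1 ≤ p) (d : ℕ)
    (f : (Fin p → ℕ) → ℝ) (hker : IsKernel f)
    (hsupp : ∀ i : Fin p → ℕ, (∃ k, d ≤ i k) → f i = 0) :
    μ[homSum p d f (fun i ω => if t ≤ Θ i ω then X i ω else Xhat i ω) |
        ⨆ i, MeasurableSpace.comap (X i) inferInstance]
      =ᵐ[μ] fun ω => Real.exp (-(p * t)) * homSum p d f X ω := by
  classical
  obtain ⟨hsym, hdiag⟩ := hker
  have hfun : homSum p d f (fun i ω => if t ≤ Θ i ω then X i ω else Xhat i ω)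
      = ∑ i : Fin p → Fin d, (fun ω => f (fun k => ((i k : ℕ))) *
          ∏ k, (if t ≤ Θ ((i k : ℕ)) ω then X ((i k : ℕ)) ω else Xhat ((i k : ℕ)) ω)) := by
    funext ω
    simp only [homSum, Finset.sum_apply]
  have per : ∀ i : Fin p → Fin d,
      Integrable (fun ω => f (fun k => ((i k : ℕ))) *
        ∏ k, (if t ≤ Θ ((i k : ℕ)) ω then X ((i k : ℕ)) ω else Xhat ((i k : ℕ)) ω)) μ ∧
      μ[(fun ω => f (fun k => ((i k : ℕ))) *
          ∏ k, (if t ≤ Θ ((i k : ℕ)) ω then X ((i k : ℕ)) ω else Xhat ((i k : ℕ)) ω)) |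
          ⨆ n, MeasurableSpace.comap (X n) inferInstance]
        =ᵐ[μ] fun ω => f (fun k => ((i k : ℕ))) *
          (Real.exp (-(p * t)) * ∏ k, X ((i k : ℕ)) ω) := by
    intro i
    by_cases hinj : Function.Injective (fun k => ((i k : ℕ)))
    · have hk := key_lemma μ X Xhat Θ hXmeas hXhatmeas hΘmeas hXint hXmean hIndep hcopy
        hexp t ht p _ hinj
      constructor
      · exact (hk.1).const_mul _
      · have hsmul : (fun ω => f (fun k => ((i k : ℕ))) *
            ∏ k, (if t ≤ Θ ((i k : ℕ)) ω then X ((i k : ℕ)) ω else Xhat ((i k : ℕ)) ω))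
            = f (fun k => ((i k : ℕ))) • (fun ω =>
                ∏ k, (if t ≤ Θ ((i k : ℕ)) ω then X ((i k : ℕ)) ω else Xhat ((i k : ℕ)) ω)) := by
          funext ω
          simp [smul_eq_mul]
        rw [hsmul]
        refine (condExp_smul _ _ _).trans ?_
        filter_upwards [hk.2] with ω h
        simp only [Pi.smul_apply, smul_eq_mul, h]
    · have hz : f (fun k => ((i k : ℕ))) = 0 := hdiag _ hinj
      constructor
      · have h0 : (fun ω => f (fun k => ((i k : ℕ))) *
            ∏ k, (if t ≤ Θ ((i k : ℕ)) ω then X ((i k : ℕ)) ω else Xhat ((i k : ℕ)) ω))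
            = (0 : Ω → ℝ) := by
          funext ω; simp [hz]
        rw [h0]
        exact integrable_zero _ _ _
      · have h0 : (fun ω => f (fun k => ((i k : ℕ))) *
            ∏ k, (if t ≤ Θ ((i k : ℕ)) ω then X ((i k : ℕ)) ω else Xhat ((i k : ℕ)) ω))
            = (0 : Ω → ℝ) := by
          funext ω; simp [hz]
        rw [h0, condExp_zero]
        refine Filter.Eventually.of_forall fun ω => ?_
        simp [hz]
  rw [hfun]
  refine (condExp_finsetSum (fun i _ => (per i).1) _).trans ?_
  have h_all : ∀ᵐ ω ∂μ, ∀ i : Fin p → Fin d,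
      (μ[(fun ω => f (fun k => ((i k : ℕ))) *
          ∏ k, (if t ≤ Θ ((i k : ℕ)) ω then X ((i k : ℕ)) ω else Xhat ((i k : ℕ)) ω)) |
          ⨆ n, MeasurableSpace.comap (X n) inferInstance]) ω
        = f (fun k => ((i k : ℕ))) * (Real.exp (-(p * t)) * ∏ k, X ((i k : ℕ)) ω) :=
    (ae_all_iff).2 fun i => (per i).2
  filter_upwards [h_all] with ω hω
  rw [Finset.sum_apply, Finset.sum_congr rfl fun i _ => hω i]
  simp only [homSum]
  rw [Finset.mul_sum]
  exact Finset.sum_congr rfl fun i _ => by ring
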